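/- Let (X,T) be a topological dynamical system and F = {f_n} a subadditive potential on X. Then for every x ∈ X and every positive integer n, writing n = sk + l with s ≥ 0 and 0 ≤ l < k, one has f_n(x) ≤ 4C₁ + Σ_{i=0}^{n−1} (1/k) f_k(T^i x), where C₁ = max_{1≤j≤2k} max_{x∈X} |f_j(x)|. -/

import Mathlib

open MeasureTheory Filter Set Topology
open scoped ENNReal NNReal

noncomputable section

variable {X : Type*}

/-- The Bowen ball `B_n(x, ε)` for the map `T`. -/
def bowenBall [PseudoMetricSpace X] (T : X → X) (n : ℕ) (x : X) (ε : ℝ) : Set X :=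
  {y | ∀ i < n, dist (T^[i] x) (T^[i] y) < ε}

/-- Supremum of `g` over the Bowen ball `B_n(x,ε)`. -/
def supBowen [PseudoMetricSpace X] (T : X → X) (g : X → ℝ) (n : ℕ) (x : X) (ε : ℝ) : ℝ :=
  sSup (g '' bowenBall T n x ε)

/-- A subadditive potential: a sequence of continuous functions `f n` (for `n ≥ 1`)
with `f (n+m) x ≤ f n x + f m (T^[n] x)`. -/
def IsSubadditivePotential [TopologicalSpace X] (T : X → X) (f : ℕ → X → ℝ) : Prop :=
  (∀ n, 1 ≤ n → Continuous (f n)) ∧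
    ∀ n m, 1 ≤ n → 1 ≤ m → ∀ x : X, f (n + m) x ≤ f n x + f m (T^[n] x)

/-- A supadditive potential. -/
def IsSupadditivePotential [TopologicalSpace X] (T : X → X) (f : ℕ → X → ℝ) : Prop :=
  (∀ n, 1 ≤ n → Continuous (f n)) ∧
    ∀ n m, 1 ≤ n → 1 ≤ m → ∀ x : X, f (n + m) x ≥ f n x + f m (T^[n] x)

/-- The additive potential generated by a function `ψ` (Birkhoff sums). -/
def birkhoffPot (T : X → X) (ψ : X → ℝ) : ℕ → X → ℝ :=
  fun n x => ∑ i ∈ Finset.range n, ψ (T^[i] x)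

section Carath

variable [PseudoMetricSpace X]

/-- Generic Carathéodory sum `M(Z,·,s,N,ε)`; the weight `w n x ε` is the exponent
attached to the Bowen ball `B_n(x,ε)`. -/
def Mcara (T : X → X) (w : ℕ → X → ℝ → ℝ) (Z : Set X) (s : ℝ) (N : ℕ) (ε : ℝ) : ℝ≥0∞ :=
  ⨅ (c : Set (X × ℕ)) (_ : ∀ p ∈ c, N ≤ p.2)
    (_ : Z ⊆ ⋃ p ∈ c, bowenBall T p.2 p.1 ε),
    ∑' p : c, ENNReal.ofReal
      (Real.exp (-s * ((p : X × ℕ).2 : ℝ) + w (p : X × ℕ).2 (p : X × ℕ).1 ε))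

/-- `m(Z,·,s,ε) = lim_{N→∞} M(Z,·,s,N,ε)` (the limit of the monotone quantity). -/
def mcara (T : X → X) (w : ℕ → X → ℝ → ℝ) (Z : Set X) (s ε : ℝ) : ℝ≥0∞ :=
  ⨆ N, Mcara T w Z s N ε

/-- Carathéodory (topological) pressure on `Z` at scale `ε`. -/
def cPressEps (T : X → X) (w : ℕ → X → ℝ → ℝ) (Z : Set X) (ε : ℝ) : ℝ :=
  sInf {s : ℝ | mcara T w Z s ε = 0}

/-- Carathéodory (topological) pressure `P_Z(T,·)`. -/
def cPress (T : X → X) (w : ℕ → X → ℝ → ℝ) (Z : Set X) : ℝ :=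
  liminf (fun ε => cPressEps T w Z ε) (𝓝[>] (0 : ℝ))

/-- `Λ(Z,·,N,ε)`: covers with Bowen balls all of order `N`. -/
def lamCov (T : X → X) (w : ℕ → X → ℝ → ℝ) (Z : Set X) (N : ℕ) (ε : ℝ) : ℝ≥0∞ :=
  ⨅ (c : Set X) (_ : Z ⊆ ⋃ x ∈ c, bowenBall T N x ε),
    ∑' x : c, ENNReal.ofReal (Real.exp (w N (x : X) ε))

/-- Lower capacity pressure at scale `ε`. -/
def CPlowEps (T : X → X) (w : ℕ → X → ℝ → ℝ) (Z : Set X) (ε : ℝ) : ℝ :=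
  liminf (fun N : ℕ => (N : ℝ)⁻¹ * Real.log (lamCov T w Z N ε).toReal) atTop

/-- Upper capacity pressure at scale `ε`. -/
def CPupEps (T : X → X) (w : ℕ → X → ℝ → ℝ) (Z : Set X) (ε : ℝ) : ℝ :=
  limsup (fun N : ℕ => (N : ℝ)⁻¹ * Real.log (lamCov T w Z N ε).toReal) atTop

def CPlow (T : X → X) (w : ℕ → X → ℝ → ℝ) (Z : Set X) : ℝ :=
  liminf (fun ε => CPlowEps T w Z ε) (𝓝[>] (0 : ℝ))

def CPup (T : X → X) (w : ℕ → X → ℝ → ℝ) (Z : Set X) : ℝ :=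
  liminf (fun ε => CPupEps T w Z ε) (𝓝[>] (0 : ℝ))

/-- The subadditive weight: `sup_{y ∈ B_n(x,ε)} f_n(y)`. -/
def wSub (T : X → X) (f : ℕ → X → ℝ) : ℕ → X → ℝ → ℝ :=
  fun n x ε => supBowen T (f n) n x ε

/-- The supadditive weight: the value `f_n(x)` at the centre. -/
def wSup (f : ℕ → X → ℝ) : ℕ → X → ℝ → ℝ :=
  fun n x _ => f n x

end Carath

section MeasDefs

variable [PseudoMetricSpace X] [MeasurableSpace X]

/-- `P_μ(T,·,n,ε,δ)` via `(n,ε,δ)`-spanning sets. -/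
def spanPress (T : X → X) (w : ℕ → X → ℝ → ℝ) (μ : Measure X) (n : ℕ) (ε δ : ℝ) : ℝ :=
  sInf { r : ℝ | ∃ E : Finset X,
    ENNReal.ofReal (1 - δ) ≤ μ (⋃ x ∈ E, bowenBall T n x ε) ∧
    r = ∑ x ∈ E, Real.exp (w n x ε) }

def spanPressEpsDelta (T : X → X) (w : ℕ → X → ℝ → ℝ) (μ : Measure X) (ε δ : ℝ) : ℝ :=
  limsup (fun n : ℕ => (n : ℝ)⁻¹ * Real.log (spanPress T w μ n ε δ)) atTop

def spanPressDelta (T : X → X) (w : ℕ → X → ℝ → ℝ) (μ : Measure X) (δ : ℝ) : ℝ :=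
  liminf (fun ε => spanPressEpsDelta T w μ ε δ) (𝓝[>] (0 : ℝ))

/-- The measure-theoretic pressure `P_μ(T,·)`. -/
def measPress (T : X → X) (w : ℕ → X → ℝ → ℝ) (μ : Measure X) : ℝ :=
  liminf (fun δ => spanPressDelta T w μ δ) (𝓝[>] (0 : ℝ))

/-- `P*_μ(T,·,ε) = inf {P_Z(T,·,ε) : μ Z = 1}`. -/
def cPressStarEps (T : X → X) (w : ℕ → X → ℝ → ℝ) (μ : Measure X) (ε : ℝ) : ℝ :=
  sInf { p : ℝ | ∃ Z : Set X, μ Z = 1 ∧ p = cPressEps T w Z ε }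

/-- `P*_μ(T,·)`. -/
def cPressStar (T : X → X) (w : ℕ → X → ℝ → ℝ) (μ : Measure X) : ℝ :=
  liminf (fun ε => cPressStarEps T w μ ε) (𝓝[>] (0 : ℝ))

def CPlowStarEps (T : X → X) (w : ℕ → X → ℝ → ℝ) (μ : Measure X) (ε : ℝ) : ℝ :=
  liminf (fun δ : ℝ =>
      sInf { p : ℝ | ∃ Z : Set X, ENNReal.ofReal (1 - δ) ≤ μ Z ∧ p = CPlowEps T w Z ε })
    (𝓝[>] (0 : ℝ))

def CPupStarEps (T : X → X) (w : ℕ → X → ℝ → ℝ) (μ : Measure X) (ε : ℝ) : ℝ :=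
  liminf (fun δ : ℝ =>
      sInf { p : ℝ | ∃ Z : Set X, ENNReal.ofReal (1 - δ) ≤ μ Z ∧ p = CPupEps T w Z ε })
    (𝓝[>] (0 : ℝ))

def CPlowStar (T : X → X) (w : ℕ → X → ℝ → ℝ) (μ : Measure X) : ℝ :=
  liminf (fun ε => CPlowStarEps T w μ ε) (𝓝[>] (0 : ℝ))

def CPupStar (T : X → X) (w : ℕ → X → ℝ → ℝ) (μ : Measure X) : ℝ :=
  liminf (fun ε => CPupStarEps T w μ ε) (𝓝[>] (0 : ℝ))

/-- `F_*(μ) = inf_{n ≥ 1} (1/n)∫ f_n dμ` (subadditive case). -/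
def potStarInf (f : ℕ → X → ℝ) (μ : Measure X) : ℝ :=
  sInf { r : ℝ | ∃ n : ℕ, 1 ≤ n ∧ r = (n : ℝ)⁻¹ * ∫ x, f n x ∂μ }

/-- `Φ_*(μ) = sup_{n ≥ 1} (1/n)∫ φ_n dμ` (supadditive case). -/
def potStarSup (f : ℕ → X → ℝ) (μ : Measure X) : ℝ :=
  sSup { r : ℝ | ∃ n : ℕ, 1 ≤ n ∧ r = (n : ℝ)⁻¹ * ∫ x, f n x ∂μ }

/-- The Brin–Katok local entropy of `μ` at `x` equals `h`. -/
def LocalEntEq (T : X → X) (μ : Measure X) (x : X) (h : ℝ) : Prop :=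
  Tendsto (fun ε : ℝ =>
      limsup (fun n : ℕ => (n : ℝ)⁻¹ * (-(Real.log ((μ (bowenBall T n x ε)).toReal)))) atTop)
    (𝓝[>] (0 : ℝ)) (𝓝 h)

end MeasDefs

section Entropy

variable [MeasurableSpace X]

/-- Entropy of the `n`-th dynamical refinement of the finite partition `P`. -/
def dynH (T : X → X) (μ : Measure X) {k : ℕ} (P : Fin k → Set X) (n : ℕ) : ℝ :=
  ∑ a : Fin n → Fin k,
    Real.negMulLog (μ (⋂ i : Fin n, T^[(i : ℕ)] ⁻¹' P (a i))).toReal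

/-- The Kolmogorov–Sinai (measure-theoretic) entropy of `T` w.r.t. `μ`: the supremum,
over finite measurable partitions `P`, of `lim_n (1/n) H(⋁_{i<n} T^{-i}P)`. -/
def ksEntropy (T : X → X) (μ : Measure X) : ℝ :=
  sSup { h : ℝ | ∃ (k : ℕ) (P : Fin k → Set X),
    (∀ i, MeasurableSet (P i)) ∧ Pairwise (Function.onFun Disjoint P) ∧
    (⋃ i, P i) = univ ∧
    h = liminf (fun n : ℕ => (n : ℝ)⁻¹ * dynH T μ P n) atTop }

end Entropy

end

/-- For a subadditive potential and a fixed `k ≥ 1`, with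
`C₁ = max_{1 ≤ j ≤ 2k} max_x |f_j(x)|`, every `x ∈ X` and `n ≥ 1` satisfy
`f_n(x) ≤ 4C₁ + Σ_{i<n} (1/k) f_k(T^i x)`. -/
theorem subadditive_block_bound
    {X : Type*} [MetricSpace X] [CompactSpace X]
    (T : X → X) (hT : Continuous T)
    (f : ℕ → X → ℝ) (hf : IsSubadditivePotential T f)
    (k : ℕ) (hk : 1 ≤ k)
    (C₁ : ℝ) (hC₁ : C₁ = sSup { r : ℝ | ∃ (j : ℕ) (x : X), 1 ≤ j ∧ j ≤ 2 * k ∧ r = |f j x| }) :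
    ∀ (x : X) (n : ℕ), 1 ≤ n →
      f n x ≤ 4 * C₁ + ∑ i ∈ Finset.range n, (k : ℝ)⁻¹ * f k (T^[i] x) := by
  intro x n hn
  have hNe : Nonempty X := ⟨x⟩
  -- C₁ bounds |f j| for 1 ≤ j ≤ 2k
  have hbdd : BddAbove { r : ℝ | ∃ (j : ℕ) (x : X), 1 ≤ j ∧ j ≤ 2 * k ∧ r = |f j x| } := by
    have hB : ∀ j : ℕ, ∃ B : ℝ, ∀ y : X, 1 ≤ j → |f j y| ≤ B := by
      intro j
      by_cases hj : 1 ≤ j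
      · obtain ⟨z, -, hz⟩ := isCompact_univ.exists_isMaxOn ⟨x, Set.mem_univ x⟩
          ((hf.1 j hj).abs.continuousOn)
        exact ⟨|f j z|, fun y _ => hz (Set.mem_univ y)⟩
      · exact ⟨0, fun y h => absurd h hj⟩
    choose B hB using hB
    refine ⟨∑ j ∈ Finset.Icc 1 (2 * k), |B j|, ?_⟩
    rintro r ⟨j, y, h1, h2, rfl⟩
    calc |f j y| ≤ B j := hB j y h1
      _ ≤ |B j| := le_abs_self _
      _ ≤ ∑ j ∈ Finset.Icc 1 (2 * k), |B j| :=
        Finset.single_le_sum (fun i _ => abs_nonneg (B i)) (Finset.mem_Icc.mpr ⟨h1, h2⟩)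
  have habs : ∀ (j : ℕ) (y : X), 1 ≤ j → j ≤ 2 * k → |f j y| ≤ C₁ := by
    intro j y h1 h2
    rw [hC₁]
    exact le_csSup hbdd ⟨j, y, h1, h2, rfl⟩
  have hC0 : 0 ≤ C₁ := (abs_nonneg _).trans (habs 1 x le_rfl (by omega))
  have hub : ∀ (j : ℕ) (y : X), 1 ≤ j → j ≤ 2 * k → f j y ≤ C₁ :=
    fun j y h1 h2 => (le_abs_self _).trans (habs j y h1 h2)
  have hlb : ∀ (y : X), -C₁ ≤ f k y :=
    fun y => neg_le_of_abs_le (habs k y hk (by omega))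
  have hk0 : (0 : ℝ) < (k : ℝ) := by exact_mod_cast hk
  -- the key subadditive ladder estimate
  have key : ∀ s t : ℕ, k ≤ t → t ≤ 2 * k → ∀ y : X,
      f (s * k + t) y ≤ (∑ m ∈ Finset.range s, f k (T^[m * k] y)) + C₁ := by
    intro s
    induction s with
    | zero =>
      intro t h1 h2 y
      simpa using hub t y (by omega) h2
    | succ s ih =>
      intro t h1 h2 y
      have hsub := hf.2 k (s * k + t) hk (by omega) y
      have hrw : (s + 1) * k + t = k + (s * k + t) := by ring
      have h2' := ih t h1 h2 (T^[k] y)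
      have hit : ∀ m : ℕ, T^[m * k] (T^[k] y) = T^[(m + 1) * k] y := by
        intro m
        rw [show (m + 1) * k = m * k + k by ring, Function.iterate_add_apply]
      rw [hrw]
      calc f (k + (s * k + t)) y ≤ f k y + f (s * k + t) (T^[k] y) := hsub
        _ ≤ f k y + ((∑ m ∈ Finset.range s, f k (T^[m * k] (T^[k] y))) + C₁) := by linarith
        _ = (∑ m ∈ Finset.range (s + 1), f k (T^[m * k] y)) + C₁ := by
            rw [Finset.sum_range_succ']
            simp only [hit, Nat.zero_mul, Function.iterate_zero_apply]
            ring
  rcases lt_or_ge n (2 * k) with hcase | hcase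
  · -- small case: n < 2k
    have h1 : f n x ≤ C₁ := hub n x hn (by omega)
    have hterm : ∀ i ∈ Finset.range n, -((k : ℝ)⁻¹ * C₁) ≤ (k : ℝ)⁻¹ * f k (T^[i] x) := by
      intro i _
      have hfl := hlb (T^[i] x)
      have hki : (0 : ℝ) ≤ (k : ℝ)⁻¹ := by positivity
      nlinarith
    have h2 : -(2 * C₁) ≤ ∑ i ∈ Finset.range n, (k : ℝ)⁻¹ * f k (T^[i] x) := by
      have hs := Finset.sum_le_sum hterm
      rw [Finset.sum_const, Finset.card_range] at hs
      have hnk : (n : ℝ) * (k : ℝ)⁻¹ ≤ 2 := by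
        have h2k : (n : ℝ) ≤ 2 * (k : ℝ) := by exact_mod_cast hcase.le
        calc (n : ℝ) * (k : ℝ)⁻¹ ≤ (2 * (k : ℝ)) * (k : ℝ)⁻¹ :=
              mul_le_mul_of_nonneg_right h2k (by positivity)
          _ = 2 := by field_simp
      have hsmul : (n : ℕ) • (-((k : ℝ)⁻¹ * C₁)) = -((n : ℝ) * (k : ℝ)⁻¹ * C₁) := by
        rw [nsmul_eq_mul]; ring
      rw [hsmul] at hs
      nlinarith
    linarith
  · -- main case: 2k ≤ n
    set g : ℕ → ℝ := fun i => f k (T^[i] x) with hg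
    -- partition identity: summing the residue columns gives the full Birkhoff sum
    have hpart : ∑ j ∈ Finset.range k,
        (∑ m ∈ Finset.range n, if m * k + j < n then g (m * k + j) else 0)
        = ∑ i ∈ Finset.range n, g i := by
      rw [← Finset.sum_product', ← Finset.sum_filter]
      refine Finset.sum_nbij' (fun p => p.2 * k + p.1) (fun i => (i % k, i / k)) ?_ ?_ ?_ ?_ ?_
      · rintro ⟨j, m⟩ hp
        simp only [Finset.mem_filter, Finset.mem_product, Finset.mem_range] at hp ⊢
        exact hp.2
      · intro i hi
        simp only [Finset.mem_range] at hi
        simp only [Finset.mem_filter, Finset.mem_product, Finset.mem_range]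
        refine ⟨⟨Nat.mod_lt _ (by omega), lt_of_le_of_lt (Nat.div_le_self i k) hi⟩, ?_⟩
        rw [mul_comm, Nat.div_add_mod]
        exact hi
      · rintro ⟨j, m⟩ hp
        simp only [Finset.mem_filter, Finset.mem_product, Finset.mem_range] at hp
        have hjk : j < k := hp.1.1
        have hm : (m * k + j) % k = j := by
          rw [mul_comm, Nat.mul_add_mod, Nat.mod_eq_of_lt hjk]
        have hd : (m * k + j) / k = m := by
          rw [mul_comm, Nat.mul_add_div (by omega), Nat.div_eq_of_lt hjk, Nat.add_zero]
        simp [hm, hd]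
      · intro i hi
        simp only
        rw [mul_comm, Nat.div_add_mod]
      · rintro ⟨j, m⟩ hp
        rfl
    -- per-residue estimate
    have hmain : ∀ j ∈ Finset.range k, f n x ≤ 4 * C₁ +
        ∑ m ∈ Finset.range n, (if m * k + j < n then g (m * k + j) else 0) := by
      intro j hj
      rw [Finset.mem_range] at hj
      -- decompose n - j = q' * k + (k + r)
      have hdm := Nat.div_add_mod (n - j) k
      have hq1 : 1 ≤ (n - j) / k := by
        rw [Nat.le_div_iff_mul_le (by omega)]
        omega
      obtain ⟨q', hq'⟩ : ∃ q', (n - j) / k = q' + 1 := ⟨(n - j) / k - 1, by omega⟩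
      rw [hq', Nat.mul_add, Nat.mul_one] at hdm
      set r := (n - j) % k with hrdef
      have hrk : r < k := Nat.mod_lt _ (by omega)
      -- hdm : k * q' + k + r = n - j
      -- head step
      have hhead : f n x ≤ C₁ + f (n - j) (T^[j] x) := by
        rcases Nat.eq_zero_or_pos j with hj0 | hj1
        · subst hj0
          simp only [Function.iterate_zero_apply, Nat.sub_zero]
          linarith
        · have hsub := hf.2 j (n - j) hj1 (by omega) x
          rw [show j + (n - j) = n by omega] at hsub
          have hfj : f j x ≤ C₁ := hub j x hj1 (by omega)
          linarith
      -- ladder step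
      have hlen : q' * k + (k + r) = n - j := by
        rw [mul_comm, ← add_assoc]; exact hdm
      have hladd : f (n - j) (T^[j] x) ≤
          (∑ m ∈ Finset.range q', g (m * k + j)) + C₁ := by
        have hkey := key q' (k + r) (by omega) (by omega) (T^[j] x)
        rw [hlen] at hkey
        have hit : ∀ m : ℕ, f k (T^[m * k] (T^[j] x)) = g (m * k + j) := by
          intro m
          rw [hg]
          simp only []
          rw [Function.iterate_add_apply]
        calc f (n - j) (T^[j] x) ≤ (∑ m ∈ Finset.range q', f k (T^[m * k] (T^[j] x))) + C₁ := hkey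
          _ = (∑ m ∈ Finset.range q', g (m * k + j)) + C₁ := by
              rw [Finset.sum_congr rfl (fun m _ => hit m)]
      -- compare the ladder with the truncated column sum
      have hcol : (∑ m ∈ Finset.range q', g (m * k + j)) ≤
          (∑ m ∈ Finset.range n, (if m * k + j < n then g (m * k + j) else 0)) + 2 * C₁ := by
        have hq'n : q' ≤ n := by
          have h1 : q' * 1 ≤ q' * k := Nat.mul_le_mul_left q' hk
          omega
        -- split range n at q'
        have hsplit : (∑ m ∈ Finset.Ico 0 q', (if m * k + j < n then g (m * k + j) else 0))
            + (∑ m ∈ Finset.Ico q' n, (if m * k + j < n then g (m * k + j) else 0))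
            = ∑ m ∈ Finset.range n, (if m * k + j < n then g (m * k + j) else 0) := by
          rw [Finset.range_eq_Ico]
          exact Finset.sum_Ico_consecutive _ (Nat.zero_le _) hq'n
        -- first chunk is exactly the ladder
        have hfirst : (∑ m ∈ Finset.Ico 0 q', (if m * k + j < n then g (m * k + j) else 0))
            = ∑ m ∈ Finset.range q', g (m * k + j) := by
          rw [← Finset.range_eq_Ico]
          refine Finset.sum_congr rfl ?_
          intro m hm
          rw [Finset.mem_range] at hm
          have hlt : m * k + j < n := by
            have h1 : (m + 1) * k ≤ q' * k := Nat.mul_le_mul_right k (by omega)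
            have h2 : q' * k = k * q' := mul_comm _ _
            -- m*k + k ≤ k*q', k*q' + k + r = n - j, j < k ≤ n
            have h3 : m * k + k ≤ k * q' := by
              rw [← h2]; calc m * k + k = (m + 1) * k := by ring
                _ ≤ q' * k := h1
            omega
          rw [if_pos hlt]
        -- tail is bounded below by -2C₁
        have htail : -(2 * C₁) ≤
            ∑ m ∈ Finset.Ico q' n, (if m * k + j < n then g (m * k + j) else 0) := by
          have hpt : ∀ m ∈ Finset.Ico q' n,
              (if m * k + j < n then -C₁ else 0) ≤ (if m * k + j < n then g (m * k + j) else 0) := by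
            intro m _
            split_ifs with h
            · exact hlb _
            · exact le_rfl
          have hsum := Finset.sum_le_sum hpt
          have hcard : ((Finset.Ico q' n).filter (fun m => m * k + j < n)).card ≤ 2 := by
            have hsubset : (Finset.Ico q' n).filter (fun m => m * k + j < n)
                ⊆ {q', q' + 1} := by
              intro m hm
              simp only [Finset.mem_filter, Finset.mem_Ico] at hm
              simp only [Finset.mem_insert, Finset.mem_singleton]
              by_contra hcon
              push_neg at hcon
              have hm2 : q' + 2 ≤ m := by omega
              have h1 : (q' + 2) * k ≤ m * k := Nat.mul_le_mul_right k hm2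
              have h2 : (q' + 2) * k = k * q' + 2 * k := by ring
              omega
            calc ((Finset.Ico q' n).filter (fun m => m * k + j < n)).card
                ≤ ({q', q' + 1} : Finset ℕ).card := Finset.card_le_card hsubset
              _ ≤ 2 := by
                  apply le_trans (Finset.card_insert_le _ _)
                  simp
          have heq : (∑ m ∈ Finset.Ico q' n, (if m * k + j < n then -C₁ else 0))
              = -((((Finset.Ico q' n).filter (fun m => m * k + j < n)).card : ℝ) * C₁) := by
            rw [← Finset.sum_filter]
            rw [Finset.sum_const, nsmul_eq_mul]
            ring
          rw [heq] at hsum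
          have : -((((Finset.Ico q' n).filter (fun m => m * k + j < n)).card : ℝ) * C₁)
              ≥ -(2 * C₁) := by
            have : ((((Finset.Ico q' n).filter (fun m => m * k + j < n)).card : ℝ)) ≤ 2 := by
              exact_mod_cast hcard
            nlinarith
          linarith
        linarith [hsplit, hfirst, htail]
      linarith [hhead, hladd, hcol]
    -- sum the per-residue estimates over j < k
    have hksum : (k : ℝ) * f n x ≤ (k : ℝ) * (4 * C₁) + ∑ i ∈ Finset.range n, g i := by
      have hs := Finset.sum_le_sum hmain
      rw [Finset.sum_const, Finset.card_range, Finset.sum_add_distrib, Finset.sum_const,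
        Finset.card_range, hpart, nsmul_eq_mul, nsmul_eq_mul] at hs
      linarith
    have hgoal : ∑ i ∈ Finset.range n, (k : ℝ)⁻¹ * f k (T^[i] x)
        = (k : ℝ)⁻¹ * ∑ i ∈ Finset.range n, g i := by
      rw [Finset.mul_sum]
    rw [hgoal]
    calc f n x = (k : ℝ)⁻¹ * ((k : ℝ) * f n x) := by field_simp
      _ ≤ (k : ℝ)⁻¹ * ((k : ℝ) * (4 * C₁) + ∑ i ∈ Finset.range n, g i) :=
          mul_le_mul_of_nonneg_left hksum (by positivity)
      _ = 4 * C₁ + (k : ℝ)⁻¹ * ∑ i ∈ Finset.range n, g i := by field_simp
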